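/- Let ν > 0, a = arcsinh(2/ν), C = π/(2a), and ρ = ρ₁(C) = ρ₀(C) + √(2C·ρ₀(C)) with ρ₀(C) = C + √(1+C²). Then cosh(a(z+1)/2) ≠ 0 for every z in the open Bernstein ellipse E°_ρ = {u+iv ∈ ℂ : u²/a_ρ² + v²/b_ρ² < 1}, where a_ρ = (ρ+ρ⁻¹)/2 and b_ρ = (ρ−ρ⁻¹)/2. (This is the statement that for μ = −1 the transplanted integrand is analytic in the Bernstein ellipse of parameter ρ₁(C_ν) appearing in part (1) of the paper's main theorem.) -/

import Mathlib

/-- Let `ν > 0`, `a = arcsinh(2/ν)`, `C = π/(2a)`, and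
`ρ = ρ₁(C) = ρ₀(C) + √(2C·ρ₀(C))` with `ρ₀(C) = C + √(1+C²)`. Then
`cosh(a(z+1)/2) ≠ 0` for every `z` in the open Bernstein ellipse
`E°_ρ = {u+iv : u²/a_ρ² + v²/b_ρ² < 1}` with `a_ρ = (ρ+ρ⁻¹)/2`, `b_ρ = (ρ−ρ⁻¹)/2`:
for `μ = −1` the transplanted integrand is analytic in the Bernstein ellipse of
parameter `ρ₁(C_ν)`. -/
theorem transplanted_denominator_nonzero_corner (ν : ℝ) (hν : 0 < ν)
    (a C ρ₀ ρ : ℝ) (ha : a = Real.arsinh (2 / ν)) (hC : C = Real.pi / (2 * a))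
    (hρ₀ : ρ₀ = C + Real.sqrt (1 + C ^ 2))
    (hρ : ρ = ρ₀ + Real.sqrt (2 * C * ρ₀))
    (aρ bρ : ℝ) (haρ : aρ = (ρ + ρ⁻¹) / 2) (hbρ : bρ = (ρ - ρ⁻¹) / 2) :
    ∀ z : ℂ, z.re ^ 2 / aρ ^ 2 + z.im ^ 2 / bρ ^ 2 < 1 →
      Complex.cosh ((a : ℂ) * (z + 1) / 2) ≠ 0 := by
  intro z hz hcosh
  have hapos : 0 < a := by
    rw [ha]; exact Real.arsinh_pos_iff.mpr (by positivity)
  have hCpos : 0 < C := by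
    rw [hC]; positivity
  have hρ₀pos : 0 < ρ₀ := by
    have := Real.sqrt_nonneg (1 + C ^ 2)
    rw [hρ₀]; linarith
  have hsq : Real.sqrt (1 + C ^ 2) ^ 2 = 1 + C ^ 2 :=
    Real.sq_sqrt (by positivity)
  have hρ₀sq : ρ₀ ^ 2 = 1 + 2 * C * ρ₀ := by
    rw [hρ₀]; nlinarith [hsq]
  set s := Real.sqrt (2 * C * ρ₀) with hs
  have hssq : s ^ 2 = 2 * C * ρ₀ := Real.sq_sqrt (by positivity)
  have hρpos : 0 < ρ := by
    have : 0 ≤ s := Real.sqrt_nonneg _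
    rw [hρ]; linarith
  have hinv : ρ⁻¹ = ρ₀ - s := by
    have hmul : ρ * (ρ₀ - s) = 1 := by rw [hρ]; nlinarith [hssq, hρ₀sq]
    field_simp
    nlinarith [hmul]
  have haρ' : aρ = ρ₀ := by rw [haρ, hinv, hρ]; ring
  have hbρ' : bρ = s := by rw [hbρ, hinv, hρ]; ring
  -- zeros of cosh
  have h0 : Complex.cos ((a : ℂ) * (z + 1) / 2 * Complex.I) = 0 := by
    rw [Complex.cos_mul_I, hcosh]
  obtain ⟨k, hk⟩ := Complex.cos_eq_zero_iff.mp h0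
  have haC : (a : ℂ) ≠ 0 := by exact_mod_cast hapos.ne'
  have hz1 : (a : ℂ) * (z + 1) = -((2 * (k : ℂ) + 1) * Real.pi) * Complex.I := by
    linear_combination (-2 * Complex.I) * hk + ((a : ℂ) * (z + 1)) * Complex.I_sq
  have hzval : z = ((-((2 * (k : ℝ) + 1) * Real.pi / a) : ℝ) : ℂ) * Complex.I - 1 := by
    push_cast
    field_simp
    linear_combination hz1
  have hre : z.re = -1 := by rw [hzval]; simp
  have him : z.im = -((2 * (k : ℝ) + 1) * Real.pi / a) := by
    rw [hzval]; simp
  have hπ : Real.pi = 2 * a * C := by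
    rw [hC]; field_simp
  have himval : z.im = -((2 * (k : ℝ) + 1) * 2 * C) := by
    rw [him, hπ]; field_simp
  have hkabs : (1 : ℝ) ≤ (2 * (k : ℝ) + 1) ^ 2 := by
    have h1 : (1 : ℤ) ≤ (2 * k + 1) ^ 2 := by
      have h0 : 1 ≤ |2 * k + 1| := Int.one_le_abs (by omega)
      calc (1 : ℤ) = 1 * 1 := by ring
        _ ≤ |2 * k + 1| * |2 * k + 1| :=
            mul_le_mul h0 h0 one_pos.le (abs_nonneg _)
        _ = (2 * k + 1) ^ 2 := by rw [← abs_mul, abs_mul_self]; ring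
    have : (1 : ℝ) ≤ ((2 * k + 1 : ℤ) : ℝ) ^ 2 := by exact_mod_cast h1
    push_cast at this
    linarith
  have himsq : 4 * C ^ 2 ≤ z.im ^ 2 := by
    rw [himval]
    have h := mul_le_mul_of_nonneg_right hkabs
      (show (0 : ℝ) ≤ 4 * C ^ 2 by positivity)
    calc 4 * C ^ 2 = 1 * (4 * C ^ 2) := by ring
      _ ≤ (2 * (k : ℝ) + 1) ^ 2 * (4 * C ^ 2) := h
      _ = (-((2 * (k : ℝ) + 1) * 2 * C)) ^ 2 := by ring
  -- contradiction with ellipse membership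
  have hbsq : bρ ^ 2 = 2 * C * ρ₀ := by rw [hbρ']; exact hssq
  have h1 : z.re ^ 2 / aρ ^ 2 = 1 / ρ₀ ^ 2 := by rw [hre, haρ']; ring
  have h2 : 2 * C / ρ₀ ≤ z.im ^ 2 / bρ ^ 2 := by
    rw [hbsq]
    rw [div_le_div_iff₀ (by positivity) (by positivity)]
    have h := mul_le_mul_of_nonneg_right himsq hρ₀pos.le
    linarith
  have h3 : 1 / ρ₀ ^ 2 + 2 * C / ρ₀ = 1 := by
    field_simp
    linear_combination (-1 : ℝ) * hρ₀sq
  rw [h1] at hz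
  linarith
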